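/- Let B = (f_1,…,f_n) and its dual B^∨ = (f_1^∨,…,f_n^∨) be bases of ℝ^n all of whose n×n matrices have the property that every square minor is nonzero (condition 𝒰). Then there exists c(B) > 0 such that: for all x, y ∈ (ℝ*)^n and all v ∈ (ℝ*)^n with |∏_i v_i| = 1, if χ_{vB}(x,y) ≠ 0 then either ‖v‖ < c(B)·sup_i(‖y‖²/|y_i|²) or ‖v^{−1}‖ < c(B)·sup_i(‖x‖²/|x_i|²). -/

import Mathlib

open scoped BigOperators Classical


lemma inv_vec_bound {s : ℕ} (A : Matrix (Fin s) (Fin s) ℝ) (hA : A.det ≠ 0)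
    (z : Fin s → ℝ) (k : Fin s) :
    ∃ j, |z k| ≤ (∑ a, ∑ b, |A⁻¹ a b|) * |A.mulVec z j| := by
  set q : Fin s → ℝ := A.mulVec z with hq
  obtain ⟨j, _, hj⟩ := Finset.exists_max_image Finset.univ (fun l => |q l|)
    ⟨k, Finset.mem_univ k⟩
  refine ⟨j, ?_⟩
  have hz : A⁻¹.mulVec q = z := by
    rw [hq, Matrix.mulVec_mulVec, Matrix.nonsing_inv_mul A (isUnit_iff_ne_zero.mpr hA),
      Matrix.one_mulVec]
  have h1 : |z k| = |∑ l, A⁻¹ k l * q l| := by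
    conv_lhs => rw [← hz]
    simp [Matrix.mulVec, dotProduct]
  have h2 : ∑ l, |A⁻¹ k l| * |q l| ≤ ∑ l, |A⁻¹ k l| * |q j| :=
    Finset.sum_le_sum (fun l _ =>
      mul_le_mul_of_nonneg_left (hj l (Finset.mem_univ l)) (abs_nonneg _))
  have h3 : (∑ l, |A⁻¹ k l|) ≤ ∑ a, ∑ b, |A⁻¹ a b| :=
    Finset.single_le_sum (f := fun a => ∑ b, |A⁻¹ a b|)
      (fun a _ => Finset.sum_nonneg fun b _ => abs_nonneg _) (Finset.mem_univ k)
  calc |z k| = |∑ l, A⁻¹ k l * q l| := h1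
    _ ≤ ∑ l, |A⁻¹ k l * q l| := Finset.abs_sum_le_sum_abs _ _
    _ = ∑ l, |A⁻¹ k l| * |q l| := by simp [abs_mul]
    _ ≤ ∑ l, |A⁻¹ k l| * |q j| := h2
    _ = (∑ l, |A⁻¹ k l|) * |q j| := by rw [← Finset.sum_mul]
    _ ≤ (∑ a, ∑ b, |A⁻¹ a b|) * |q j| :=
        mul_le_mul_of_nonneg_right h3 (abs_nonneg _)

lemma key_lemma (n : ℕ) (hn : 0 < n) (F : Fin n → Fin n → ℝ)
    (hminor : ∀ (k : ℕ) (r c : Fin k → Fin n), Function.Injective r →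
      Function.Injective c → ((Matrix.of F).submatrix r c).det ≠ 0) :
    ∃ δ C : ℝ, 0 < δ ∧ 0 ≤ C ∧
      ∀ (S T : Finset (Fin n)), S.card = T.card → S.Nonempty →
      ∀ (w : Fin n → ℝ) (a b : ℝ), 0 ≤ b →
      (∃ k ∈ T, a ≤ |w k|) → (∀ k ∉ T, |w k| ≤ b) →
      ∃ i ∈ S, δ * a - C * b ≤ |∑ k, F i k * w k| := by
  classical
  haveI : Nonempty (Fin n) := ⟨⟨0, hn⟩⟩
  have hneΦ : (Finset.univ :
      Finset ((s : Fin (n+1)) × ((Fin (s : ℕ) → Fin n) × (Fin (s : ℕ) → Fin n)))).Nonempty :=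
    ⟨⟨0, Fin.elim0, Fin.elim0⟩, Finset.mem_univ _⟩
  set Kf : ((s : Fin (n+1)) × ((Fin (s : ℕ) → Fin n) × (Fin (s : ℕ) → Fin n))) → ℝ :=
    fun p => ∑ a, ∑ b, |((Matrix.of F).submatrix p.2.1 p.2.2)⁻¹ a b| with hKf
  set Km : ℝ := Finset.univ.sup' hneΦ Kf with hKm
  have hKm0 : 0 ≤ Km := by
    have h := Finset.le_sup' Kf (Finset.mem_univ
      (⟨0, Fin.elim0, Fin.elim0⟩ : (s : Fin (n+1)) × ((Fin (s : ℕ) → Fin n) × (Fin (s : ℕ) → Fin n))))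
    rw [← hKm] at h
    refine le_trans (le_of_eq ?_) h
    simp [hKf]
    exact (Finset.sum_eq_zero (fun a _ => by rcases a with ⟨a, ha⟩; simp at ha)).symm
  set MF : ℝ := Finset.univ.sup' Finset.univ_nonempty (fun p : Fin n × Fin n => |F p.1 p.2|)
    with hMF
  have hMFle : ∀ i k, |F i k| ≤ MF := fun i k =>
    Finset.le_sup' (fun p : Fin n × Fin n => |F p.1 p.2|) (Finset.mem_univ (i, k))
  have hMF0 : 0 ≤ MF := le_trans (abs_nonneg _) (hMFle ⟨0, hn⟩ ⟨0, hn⟩)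
  refine ⟨(Km + 1)⁻¹, n * MF, by positivity, by positivity, ?_⟩
  intro S T hcard hS w a b hb ha hout
  obtain ⟨k0, hk0T, hk0a⟩ := ha
  have hm : 0 < S.card := Finset.card_pos.mpr hS
  have hmn : S.card ≤ n := by simpa using Finset.card_le_univ S
  set remb := S.orderEmbOfFin rfl with hremb
  set cemb := T.orderEmbOfFin hcard.symm with hcemb
  set A : Matrix (Fin S.card) (Fin S.card) ℝ :=
    (Matrix.of F).submatrix (fun j => remb j) (fun j => cemb j) with hA
  have hAdet : A.det ≠ 0 :=
    hminor S.card _ _ (fun a b h => remb.injective h) (fun a b h => cemb.injective h)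
  set z : Fin S.card → ℝ := fun j => w (cemb j) with hz
  -- find j0 with cemb j0 = k0
  have hrange : (k0 : Fin n) ∈ Set.range (⇑cemb) := by
    rw [Finset.range_orderEmbOfFin]; exact hk0T
  obtain ⟨j0, hj0⟩ := hrange
  obtain ⟨j, hj⟩ := inv_vec_bound A hAdet z j0
  -- bound the constant by Km
  have hKp : (∑ a, ∑ b, |A⁻¹ a b|) ≤ Km := by
    have hmlt : S.card < n + 1 := Nat.lt_succ_of_le hmn
    have h := Finset.le_sup' Kf (Finset.mem_univ
      (⟨⟨S.card, hmlt⟩, fun j => remb j, fun j => cemb j⟩ :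
        (s : Fin (n+1)) × ((Fin (s : ℕ) → Fin n) × (Fin (s : ℕ) → Fin n))))
    rw [← hKm] at h
    exact h
  have hAzj : (Km + 1)⁻¹ * a ≤ |A.mulVec z j| := by
    have h1 : a ≤ |z j0| := by rw [hz]; simpa [hj0] using hk0a
    have h2 : |z j0| ≤ (Km + 1) * |A.mulVec z j| := by
      refine le_trans hj (mul_le_mul_of_nonneg_right ?_ (abs_nonneg _))
      linarith
    rw [inv_mul_le_iff₀ (by linarith)]
    calc a ≤ |z j0| := h1
      _ ≤ (Km + 1) * |A.mulVec z j| := h2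
  refine ⟨remb j, Finset.orderEmbOfFin_mem S rfl j, ?_⟩
  -- split the sum
  have hTsum : ∑ k ∈ T, F (remb j) k * w k = A.mulVec z j := by
    rw [Matrix.mulVec]
    refine (Finset.sum_bij (fun (p : Fin S.card) _ => cemb p) ?_ ?_ ?_ ?_).symm
    · intro p _; exact Finset.orderEmbOfFin_mem T hcard.symm p
    · intro p1 _ p2 _ h; exact cemb.injective h
    · intro kk hkk
      have : kk ∈ Set.range (⇑cemb) := by rw [Finset.range_orderEmbOfFin]; exact hkk
      obtain ⟨p, hp⟩ := this
      exact ⟨p, Finset.mem_univ p, hp⟩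
    · intro p _
      simp [hA, hz, dotProduct, mul_comm]
  have hsplit : ∑ k, F (remb j) k * w k
      = A.mulVec z j + ∑ k ∈ Tᶜ, F (remb j) k * w k := by
    rw [← hTsum, Finset.sum_add_sum_compl]
  have herr : |∑ k ∈ Tᶜ, F (remb j) k * w k| ≤ (n * MF) * b := by
    calc |∑ k ∈ Tᶜ, F (remb j) k * w k| ≤ ∑ k ∈ Tᶜ, |F (remb j) k * w k| :=
          Finset.abs_sum_le_sum_abs _ _
      _ ≤ ∑ _k ∈ Tᶜ, MF * b := by
          refine Finset.sum_le_sum fun k hk => ?_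
          rw [abs_mul]
          exact mul_le_mul (hMFle _ _) (hout k (by simpa using hk)) (abs_nonneg _) hMF0
      _ = (Tᶜ.card : ℝ) * (MF * b) := by rw [Finset.sum_const, nsmul_eq_mul]
      _ ≤ (n : ℝ) * (MF * b) := by
          have : (Tᶜ.card : ℝ) ≤ (n : ℝ) := by
            exact_mod_cast le_trans (Finset.card_le_univ Tᶜ) (by simp)
          exact mul_le_mul_of_nonneg_right this (by positivity)
      _ = (n * MF) * b := by ring
  have habs : |A.mulVec z j| - |∑ k ∈ Tᶜ, F (remb j) k * w k|
      ≤ |∑ k, F (remb j) k * w k| := by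
    rw [hsplit]
    have := abs_add_le (A.mulVec z j + ∑ k ∈ Tᶜ, F (remb j) k * w k)
      (-(∑ k ∈ Tᶜ, F (remb j) k * w k))
    simp only [add_neg_cancel_right, abs_neg] at this
    linarith
  linarith

set_option maxHeartbeats 1000000

/-- The signed indicator `χ_B(x,y)` of the half-open simplicial cone
`C_B(y) = ∑_i ℝ(ε(Tr(f_i y))) f_i` (with `ℝ(+1) = ℝ_{≥0}`, `ℝ(-1) = ℝ_{<0}`),
with value `ε(det B) ∏_i ε(Tr(f_i y))` on the cone and `0` elsewhere. -/
noncomputable def chiHalf (n : ℕ) (f : Fin n → Fin n → ℝ) (x y : Fin n → ℝ) : ℝ :=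
  if ∃ c : Fin n → ℝ,
      (∀ i, if 0 < ∑ k, f i k * y k then 0 ≤ c i else c i < 0) ∧
      x = ∑ i, c i • f i
  then Real.sign (Matrix.of f).det * ∏ i, Real.sign (∑ k, f i k * y k)
  else 0

/-- let `B` and its dual `B^∨` be bases of `ℝ^n` all of whose square minors are
nonzero. There exists `c(B) > 0` such that for all `x, y ∈ (ℝ*)^n` and all `v` with
`|N(v)| = 1`, if `χ_{vB}(x,y) ≠ 0` then `‖v‖ < c(B) sup_i ‖y‖²/|y_i|²` or
`‖v⁻¹‖ < c(B) sup_i ‖x‖²/|x_i|²`. -/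
theorem chiHalf_support_norm_bound
    (n : ℕ) (hn : 0 < n) (f fd : Fin n → Fin n → ℝ)
    (hdual : ∀ i j, ∑ k, fd i k * f j k = if i = j then (1 : ℝ) else 0)
    (hminor_f : ∀ (k : ℕ) (r c : Fin k → Fin n), Function.Injective r →
      Function.Injective c → ((Matrix.of f).submatrix r c).det ≠ 0)
    (hminor_fd : ∀ (k : ℕ) (r c : Fin k → Fin n), Function.Injective r →
      Function.Injective c → ((Matrix.of fd).submatrix r c).det ≠ 0) :
    ∃ cB : ℝ, 0 < cB ∧
      ∀ (x y v : Fin n → ℝ), (∀ i, x i ≠ 0) → (∀ i, y i ≠ 0) → (∀ i, v i ≠ 0) →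
        |∏ i, v i| = 1 →
        chiHalf n (fun i k => v k * f i k) x y ≠ 0 →
        ‖v‖ < cB * ⨆ i, ‖y‖ ^ 2 / (y i) ^ 2 ∨
        ‖(fun i => (v i)⁻¹ : Fin n → ℝ)‖ < cB * ⨆ i, ‖x‖ ^ 2 / (x i) ^ 2 := by
  classical
  haveI : Nonempty (Fin n) := ⟨⟨0, hn⟩⟩
  obtain ⟨δ, C, hδ, hC, hkeyF⟩ := key_lemma n hn f hminor_f
  obtain ⟨δ', C', hδ', hC', hkeyFd⟩ := key_lemma n hn fd hminor_fd
  set K₁ : ℝ := 2 * C / δ + 2 with hK1def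
  clear_value K₁
  have hdiv1 : 0 ≤ 2 * C / δ := by positivity
  have hK1two : 2 ≤ K₁ := by linarith
  have hK1pos : 0 < K₁ := by linarith
  have hCK : C ≤ δ / 2 * K₁ := by
    have h : δ / 2 * K₁ = C + δ := by
      rw [hK1def]; field_simp
    linarith
  set cB : ℝ := K₁ + 2 * C' * K₁ / δ' + 4 * n / (δ * δ') + 2 with hcBdef
  clear_value cB
  have haux1 : 0 ≤ 2 * C' * K₁ / δ' :=
    div_nonneg (mul_nonneg (by linarith : (0:ℝ) ≤ 2 * C') hK1pos.le) hδ'.le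
  have haux2 : 0 ≤ 4 * (n : ℝ) / (δ * δ') :=
    div_nonneg (by positivity) (mul_pos hδ hδ').le
  have hcB2 : 2 ≤ cB := by linarith
  have hcBpos : 0 < cB := by linarith
  have hKcB : K₁ ≤ cB := by linarith
  refine ⟨cB, hcBpos, ?_⟩
  intro x y v hx hy hv _hprod hchi
  by_contra hcon
  push_neg at hcon
  obtain ⟨h1, h2⟩ := hcon
  -- extract coefficients from chiHalf ≠ 0
  have hcond : ∃ c : Fin n → ℝ,
      (∀ i, if 0 < ∑ k, (v k * f i k) * y k then 0 ≤ c i else c i < 0) ∧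
      x = ∑ i, c i • (fun k => v k * f i k) := by
    by_contra hno
    simp only [chiHalf] at hchi
    rw [if_neg hno] at hchi
    exact hchi rfl
  obtain ⟨cv, hsign, hxrep⟩ := hcond
  set w' : Fin n → ℝ := fun k => v k * y k with hw'
  set u : Fin n → ℝ := fun k => (v k)⁻¹ * x k with hu
  set t : Fin n → ℝ := fun i => ∑ k, f i k * w' k with ht
  have htc : ∀ i, ∑ k, (v k * f i k) * y k = t i := by
    intro i
    rw [ht]
    exact Finset.sum_congr rfl fun k _ => by rw [hw']; ring
  have htcv : ∀ i, 0 ≤ t i * cv i := by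
    intro i
    have h := hsign i
    rw [htc i] at h
    by_cases h0 : 0 < t i
    · rw [if_pos h0] at h; exact mul_nonneg h0.le h
    · rw [if_neg h0] at h
      rw [← neg_mul_neg]
      exact mul_nonneg (neg_nonneg.mpr (le_of_not_gt h0)) (neg_nonneg.mpr h.le)
  have hxk : ∀ k, x k = v k * ∑ i, cv i * f i k := by
    intro k
    have hxx : x k = ∑ i, cv i * (v k * f i k) := by
      rw [hxrep]; simp [Finset.sum_apply]
    rw [hxx, Finset.mul_sum]
    exact Finset.sum_congr rfl fun i _ => by ring
  have hcv : ∀ i, cv i = ∑ l, fd i l * u l := by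
    intro i
    have hterm : ∀ l, fd i l * u l = ∑ jj, cv jj * (fd i l * f jj l) := by
      intro l
      rw [hu]
      show fd i l * ((v l)⁻¹ * x l) = _
      rw [hxk l, inv_mul_cancel_left₀ (hv l), Finset.mul_sum]
      exact Finset.sum_congr rfl fun jj _ => by ring
    have hmain : ∑ l, fd i l * u l = cv i := by
      calc ∑ l, fd i l * u l = ∑ l, ∑ jj, cv jj * (fd i l * f jj l) :=
            Finset.sum_congr rfl fun l _ => hterm l
        _ = ∑ jj, ∑ l, cv jj * (fd i l * f jj l) := Finset.sum_comm
        _ = ∑ jj, cv jj * ∑ l, fd i l * f jj l :=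
            Finset.sum_congr rfl fun jj _ => (Finset.mul_sum _ _ _).symm
        _ = ∑ jj, cv jj * (if jj = i then 1 else 0) :=
            Finset.sum_congr rfl fun jj _ => by rw [hdual i jj]; simp [eq_comm]
        _ = cv i := by simp
    exact hmain.symm
  have hsumid : ∑ i, t i * cv i = ∑ k, x k * y k := by
    calc ∑ i, t i * cv i = ∑ i, ∑ k, f i k * w' k * cv i := by
          refine Finset.sum_congr rfl fun i _ => ?_
          rw [ht, Finset.sum_mul]
      _ = ∑ k, ∑ i, f i k * w' k * cv i := Finset.sum_comm
      _ = ∑ k, (v k * y k) * ∑ i, cv i * f i k := by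
          refine Finset.sum_congr rfl fun k _ => ?_
          rw [Finset.mul_sum]
          exact Finset.sum_congr rfl fun i _ => by rw [hw']; ring
      _ = ∑ k, x k * y k := by
          refine Finset.sum_congr rfl fun k _ => ?_
          rw [hxk k]; ring
  -- extremal indices
  obtain ⟨kv, hkv⟩ := Finite.exists_max (fun k => |v k|)
  obtain ⟨kw, hkw⟩ := Finite.exists_max (fun k => |(v k)⁻¹|)
  obtain ⟨kym, hkym⟩ := Finite.exists_min (fun k => |y k|)
  obtain ⟨kxm, hkxm⟩ := Finite.exists_min (fun k => |x k|)
  set X : ℝ := ‖x‖ with hXdef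
  set Y : ℝ := ‖y‖ with hYdef
  set nu : ℝ := |y kym| with hnudef
  set mu : ℝ := |x kxm| with hmudef
  set V : ℝ := |v kv| with hVdef
  set W : ℝ := |(v kw)⁻¹| with hWdef
  have hnu0 : 0 < nu := abs_pos.mpr (hy kym)
  have hmu0 : 0 < mu := abs_pos.mpr (hx kxm)
  have hnuY : nu ≤ Y := by
    rw [hnudef, hYdef, ← Real.norm_eq_abs]; exact norm_le_pi_norm y kym
  have hmuX : mu ≤ X := by
    rw [hmudef, hXdef, ← Real.norm_eq_abs]; exact norm_le_pi_norm x kxm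
  have hY0 : 0 < Y := lt_of_lt_of_le hnu0 hnuY
  have hX0 : 0 < X := lt_of_lt_of_le hmu0 hmuX
  have habsY : ∀ k, |y k| ≤ Y := by
    intro k; rw [hYdef, ← Real.norm_eq_abs]; exact norm_le_pi_norm y k
  have habsX : ∀ k, |x k| ≤ X := by
    intro k; rw [hXdef, ← Real.norm_eq_abs]; exact norm_le_pi_norm x k
  have hvV : ‖v‖ ≤ V :=
    (pi_norm_le_iff_of_nonneg (abs_nonneg _)).mpr
      (fun i => by rw [Real.norm_eq_abs]; exact hkv i)
  have hvW : ‖(fun i => (v i)⁻¹ : Fin n → ℝ)‖ ≤ W :=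
    (pi_norm_le_iff_of_nonneg (abs_nonneg _)).mpr
      (fun i => by rw [Real.norm_eq_abs]; exact hkw i)
  have hV : cB * (Y ^ 2 / nu ^ 2) ≤ V := by
    have hb : BddAbove (Set.range fun i => Y ^ 2 / (y i) ^ 2) :=
      (Set.finite_range _).bddAbove
    have hs := le_ciSup hb kym
    have he : Y ^ 2 / (y kym) ^ 2 = Y ^ 2 / nu ^ 2 := by rw [hnudef, sq_abs]
    rw [he] at hs
    calc cB * (Y ^ 2 / nu ^ 2) ≤ cB * ⨆ i, Y ^ 2 / (y i) ^ 2 :=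
          mul_le_mul_of_nonneg_left hs hcBpos.le
      _ ≤ ‖v‖ := h1
      _ ≤ V := hvV
  have hW2 : cB * (X ^ 2 / mu ^ 2) ≤ W := by
    have hb : BddAbove (Set.range fun i => X ^ 2 / (x i) ^ 2) :=
      (Set.finite_range _).bddAbove
    have hs := le_ciSup hb kxm
    have he : X ^ 2 / (x kxm) ^ 2 = X ^ 2 / mu ^ 2 := by rw [hmudef, sq_abs]
    rw [he] at hs
    calc cB * (X ^ 2 / mu ^ 2) ≤ cB * ⨆ i, X ^ 2 / (x i) ^ 2 :=
          mul_le_mul_of_nonneg_left hs hcBpos.le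
      _ ≤ ‖(fun i => (v i)⁻¹ : Fin n → ℝ)‖ := h2
      _ ≤ W := hvW
  clear_value X Y nu mu V W
  have hone_x : 1 ≤ X ^ 2 / mu ^ 2 := by
    rw [le_div_iff₀ (pow_pos hmu0 2)]
    have := mul_le_mul hmuX hmuX hmu0.le (le_trans hmu0.le hmuX)
    linarith [this]
  have hcBW : cB ≤ W := by
    have hh := mul_le_mul_of_nonneg_left hone_x hcBpos.le
    calc cB = cB * 1 := (mul_one cB).symm
      _ ≤ cB * (X ^ 2 / mu ^ 2) := hh
      _ ≤ W := hW2
  have hW0 : 0 < W := lt_of_lt_of_le hcBpos hcBW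
  -- sigma
  set sigma : ℝ := |w' kv| with hsigdef
  have hV0 : (0:ℝ) ≤ V := by rw [hVdef]; exact abs_nonneg _
  have hsigVnu : V * nu ≤ sigma := by
    have hh : sigma = V * |y kv| := by
      rw [hsigdef, hVdef, ← abs_mul]
    rw [hh]
    exact mul_le_mul_of_nonneg_left (hkym kv) hV0
  clear_value sigma
  have hsigY : cB * Y ≤ sigma := by
    have e2 : Y ≤ Y ^ 2 / nu := by
      rw [le_div_iff₀ hnu0]
      have := mul_le_mul_of_nonneg_left hnuY hY0.le
      linarith [this]
    have e1 : cB * (Y ^ 2 / nu ^ 2) * nu = cB * (Y ^ 2 / nu) := by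
      field_simp
    calc cB * Y ≤ cB * (Y ^ 2 / nu) := mul_le_mul_of_nonneg_left e2 hcBpos.le
      _ = cB * (Y ^ 2 / nu ^ 2) * nu := e1.symm
      _ ≤ V * nu := mul_le_mul_of_nonneg_right hV hnu0.le
      _ ≤ sigma := hsigVnu
  have hsig0 : 0 < sigma := lt_of_lt_of_le (mul_pos hcBpos hY0) hsigY
  have hWmu : cB * X ≤ W * mu := by
    have e2 : X ≤ X ^ 2 / mu := by
      rw [le_div_iff₀ hmu0]
      have := mul_le_mul_of_nonneg_left hmuX hX0.le
      linarith [this]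
    have e1 : cB * (X ^ 2 / mu ^ 2) * mu = cB * (X ^ 2 / mu) := by
      field_simp
    calc cB * X ≤ cB * (X ^ 2 / mu) := mul_le_mul_of_nonneg_left e2 hcBpos.le
      _ = cB * (X ^ 2 / mu ^ 2) * mu := e1.symm
      _ ≤ W * mu := mul_le_mul_of_nonneg_right hW2 hmu0.le
  -- kw gives a small w'-entry
  have hkwY : |w' kw| * W ≤ Y := by
    have he : (v kw * y kw) * (v kw)⁻¹ = y kw := by
      field_simp [hv kw]
    have hh : |w' kw| * W = |y kw| := by
      rw [hw', hWdef, ← abs_mul, he]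
    rw [hh]; exact habsY kw
  have hkwsmall : K₁ * |w' kw| ≤ sigma := by
    have h3 : K₁ * |w' kw| * W ≤ K₁ * Y := by
      rw [mul_assoc]
      exact mul_le_mul_of_nonneg_left hkwY hK1pos.le
    have h4 : K₁ * Y ≤ sigma * W := by
      have s1 : K₁ * Y ≤ cB * Y := mul_le_mul_of_nonneg_right hKcB hY0.le
      have s2 : cB * Y ≤ cB * (cB * Y) := by
        calc cB * Y = 1 * (cB * Y) := by ring
          _ ≤ cB * (cB * Y) :=
              mul_le_mul_of_nonneg_right (by linarith) (mul_pos hcBpos hY0).le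
      have s3 : cB * (cB * Y) ≤ W * sigma :=
        mul_le_mul hcBW hsigY (mul_pos hcBpos hY0).le hW0.le
      calc K₁ * Y ≤ cB * Y := s1
        _ ≤ cB * (cB * Y) := s2
        _ ≤ W * sigma := s3
        _ = sigma * W := by ring
    have h5 : K₁ * |w' kw| * W ≤ sigma * W := le_trans h3 h4
    exact le_of_mul_le_mul_right h5 hW0
  -- the set T of large w'-entries
  set T : Finset (Fin n) := Finset.univ.filter (fun k => sigma / K₁ < |w' k|) with hT
  have hkvT : kv ∈ T := by
    rw [hT]
    simp only [Finset.mem_filter, Finset.mem_univ, true_and]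
    rw [← hsigdef]
    exact div_lt_self hsig0 (by linarith)
  have hkwTc : kw ∉ T := by
    rw [hT]
    simp only [Finset.mem_filter, Finset.mem_univ, true_and, not_lt]
    rw [le_div_iff₀ hK1pos]
    calc |w' kw| * K₁ = K₁ * |w' kw| := by ring
      _ ≤ sigma := hkwsmall
  -- t-side counting
  set At : ℝ := δ * sigma - C * (sigma / K₁) with hAtdef
  have hAtge : δ / 2 * sigma ≤ At := by
    have hh : C * (sigma / K₁) ≤ (δ / 2 * K₁) * (sigma / K₁) :=
      mul_le_mul_of_nonneg_right hCK (div_nonneg hsig0.le hK1pos.le)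
    have he : (δ / 2 * K₁) * (sigma / K₁) = δ / 2 * sigma := by
      field_simp
    rw [hAtdef]; rw [he] at hh; linarith
  have hAt0 : 0 < At :=
    lt_of_lt_of_le (mul_pos (by linarith) hsig0) hAtge
  set BadT : Finset (Fin n) := Finset.univ.filter (fun i => |t i| < At) with hBadT
  have hBT : BadT.card < T.card := by
    by_contra hcon2
    push_neg at hcon2
    obtain ⟨S, hSsub, hScard⟩ := Finset.exists_subset_card_eq hcon2
    have hSne : S.Nonempty := by
      rw [← Finset.card_pos, hScard]
      exact Finset.card_pos.mpr ⟨kv, hkvT⟩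
    obtain ⟨i, hiS, hi⟩ := hkeyF S T hScard hSne w' sigma (sigma / K₁)
      (div_nonneg hsig0.le hK1pos.le)
      ⟨kv, hkvT, le_of_eq hsigdef⟩
      (fun k hk => by
        rw [hT] at hk
        simp only [Finset.mem_filter, Finset.mem_univ, true_and, not_lt] at hk
        exact hk)
    have hbad : |t i| < At := by
      have hmem := hSsub hiS
      rw [hBadT] at hmem
      simp only [Finset.mem_filter, Finset.mem_univ, true_and] at hmem
      exact hmem
    have hti : At ≤ |t i| := by
      rw [hAtdef]
      exact hi
    linarith
  -- c-side counting
  set bC : ℝ := K₁ * (X * Y) / sigma with hbCdef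
  have hbC0 : 0 ≤ bC := by
    rw [hbCdef]
    exact div_nonneg (mul_nonneg hK1pos.le (mul_nonneg hX0.le hY0.le)) hsig0.le
  clear_value bC
  have hsk : 0 < sigma / K₁ := div_pos hsig0 hK1pos
  have huT : ∀ k ∈ T, |u k| ≤ bC := by
    intro k hk
    rw [hT] at hk
    simp only [Finset.mem_filter, Finset.mem_univ, true_and] at hk
    have hprodk : |u k| * |w' k| = |x k * y k| := by
      rw [hu, hw', ← abs_mul]
      congr 1
      field_simp [hv k]
    have hxyk : |x k * y k| ≤ X * Y := by
      rw [abs_mul]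
      exact mul_le_mul (habsX k) (habsY k) (abs_nonneg _) hX0.le
    have h5 : |u k| * (sigma / K₁) ≤ X * Y := by
      calc |u k| * (sigma / K₁) ≤ |u k| * |w' k| :=
            mul_le_mul_of_nonneg_left hk.le (abs_nonneg _)
        _ = |x k * y k| := hprodk
        _ ≤ X * Y := hxyk
    calc |u k| = |u k| * (sigma / K₁) / (sigma / K₁) := by
          field_simp
      _ ≤ (X * Y) / (sigma / K₁) := div_le_div_of_nonneg_right h5 hsk.le
      _ = bC := by rw [hbCdef]; field_simp
  have hkwu : W * mu ≤ |u kw| := by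
    have hh : |u kw| = W * |x kw| := by rw [hu, hWdef, abs_mul]
    rw [hh]
    exact mul_le_mul_of_nonneg_left (hkxm kw) hW0.le
  set Ac : ℝ := δ' * (W * mu) - C' * bC with hAcdef
  have hAcge : δ' / 2 * (W * mu) ≤ Ac := by
    have hms : (cB * X) * (cB * Y) ≤ (W * mu) * sigma :=
      mul_le_mul hWmu hsigY (mul_pos hcBpos hY0).le
        (le_trans (mul_pos hcBpos hX0).le hWmu)
    have hC'K : 2 * C' * K₁ ≤ δ' * cB := by
      have hcb' : 2 * C' * K₁ / δ' ≤ cB := by linarith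
      rw [div_le_iff₀ hδ'] at hcb'
      linarith
    have hgoal : C' * bC ≤ δ' / 2 * (W * mu) := by
      rw [hbCdef, mul_div_assoc', div_le_iff₀ hsig0]
      have hXY0 : (0:ℝ) ≤ X * Y := (mul_pos hX0 hY0).le
      have a2 : (2 * C' * K₁) * (X * Y) ≤ (δ' * cB) * (X * Y) :=
        mul_le_mul_of_nonneg_right hC'K hXY0
      have a3 : (δ' * cB) * (X * Y) ≤ δ' * ((cB * X) * (cB * Y)) := by
        have a3' : (cB * (X * Y)) * 1 ≤ (cB * (X * Y)) * cB :=
          mul_le_mul_of_nonneg_left (by linarith : (1:ℝ) ≤ cB)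
            (mul_nonneg hcBpos.le hXY0)
        calc (δ' * cB) * (X * Y) = δ' * ((cB * (X * Y)) * 1) := by ring
          _ ≤ δ' * ((cB * (X * Y)) * cB) := mul_le_mul_of_nonneg_left a3' hδ'.le
          _ = δ' * ((cB * X) * (cB * Y)) := by ring
      have a4 : δ' * ((cB * X) * (cB * Y)) ≤ δ' * ((W * mu) * sigma) :=
        mul_le_mul_of_nonneg_left hms hδ'.le
      linarith [a2, a3, a4]
    rw [hAcdef]; linarith
  have hAc0 : 0 < Ac :=
    lt_of_lt_of_le (mul_pos (by linarith) (mul_pos hW0 hmu0)) hAcge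
  set BadC : Finset (Fin n) := Finset.univ.filter (fun i => |cv i| < Ac) with hBadC
  have hkwTc' : kw ∈ Tᶜ := Finset.mem_compl.mpr hkwTc
  have hBC : BadC.card < Tᶜ.card := by
    by_contra hcon3
    push_neg at hcon3
    obtain ⟨S, hSsub, hScard⟩ := Finset.exists_subset_card_eq hcon3
    have hSne : S.Nonempty := by
      rw [← Finset.card_pos, hScard]
      exact Finset.card_pos.mpr ⟨kw, hkwTc'⟩
    obtain ⟨i, hiS, hi⟩ := hkeyFd S Tᶜ hScard hSne u (W * mu) bC hbC0
      ⟨kw, hkwTc', hkwu⟩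
      (fun k hk => huT k (by simpa [Finset.mem_compl, not_not] using hk))
    have hbad : |cv i| < Ac := by
      have hmem := hSsub hiS
      rw [hBadC] at hmem
      simp only [Finset.mem_filter, Finset.mem_univ, true_and] at hmem
      exact hmem
    have hci : Ac ≤ |cv i| := by
      rw [hAcdef, hcv i]
      exact hi
    linarith
  -- overlap
  have hTn : T.card + Tᶜ.card = n := by
    rw [Finset.card_add_card_compl, Fintype.card_fin]
  have hunion : (BadT ∪ BadC).card < n :=
    lt_of_le_of_lt (Finset.card_union_le _ _) (by omega)
  have hcompl : ((BadT ∪ BadC)ᶜ).Nonempty := by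
    rw [← Finset.card_pos, Finset.card_compl, Fintype.card_fin]
    omega
  obtain ⟨i, hi⟩ := hcompl
  have hinotin := Finset.mem_compl.mp hi
  have hiT : At ≤ |t i| := by
    have h6 : i ∉ BadT := fun h => hinotin (Finset.mem_union_left _ h)
    rw [hBadT] at h6
    simp only [Finset.mem_filter, Finset.mem_univ, true_and, not_lt] at h6
    exact h6
  have hiC : Ac ≤ |cv i| := by
    have h6 : i ∉ BadC := fun h => hinotin (Finset.mem_union_right _ h)
    rw [hBadC] at h6
    simp only [Finset.mem_filter, Finset.mem_univ, true_and, not_lt] at h6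
    exact h6
  -- final contradiction
  have hfin1 : t i * cv i ≤ ∑ j, t j * cv j :=
    Finset.single_le_sum (fun j _ => htcv j) (Finset.mem_univ i)
  have hfin2 : ∑ k, x k * y k ≤ n * (X * Y) := by
    calc ∑ k, x k * y k ≤ ∑ k, |x k * y k| :=
          Finset.sum_le_sum fun k _ => le_abs_self _
      _ ≤ ∑ _k : Fin n, X * Y := by
          refine Finset.sum_le_sum fun k _ => ?_
          rw [abs_mul]
          exact mul_le_mul (habsX k) (habsY k) (abs_nonneg _) hX0.le
      _ = n * (X * Y) := by
          rw [Finset.sum_const, nsmul_eq_mul, Finset.card_univ, Fintype.card_fin]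
  have hlow : At * Ac ≤ t i * cv i := by
    have hh : At * Ac ≤ |t i| * |cv i| :=
      mul_le_mul hiT hiC hAc0.le (abs_nonneg _)
    rwa [← abs_mul, abs_of_nonneg (htcv i)] at hh
  have hbig : (δ / 2 * sigma) * (δ' / 2 * (W * mu)) ≤ At * Ac :=
    mul_le_mul hAtge hAcge
      (mul_pos (by linarith) (mul_pos hW0 hmu0)).le hAt0.le
  have hquant : n * (X * Y) < (δ / 2 * sigma) * (δ' / 2 * (W * mu)) := by
    have e1 : (cB * Y) * (cB * X) ≤ sigma * (W * mu) :=
      mul_le_mul hsigY hWmu (mul_pos hcBpos hX0).le hsig0.le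
    have hdd : 0 < δ * δ' := mul_pos hδ hδ'
    have e2 : 4 * (n : ℝ) + 2 * (δ * δ') ≤ δ * δ' * cB := by
      have hcb' : 4 * (n : ℝ) / (δ * δ') + 2 ≤ cB := by linarith
      have hstep := mul_le_mul_of_nonneg_right hcb' hdd.le
      have h7 : (4 * (n : ℝ) / (δ * δ') + 2) * (δ * δ') = 4 * n + 2 * (δ * δ') := by
        field_simp
      rw [h7] at hstep
      linarith [hstep]
    have e3 : (4 * (n : ℝ) + 2 * (δ * δ')) * cB ≤ δ * δ' * cB * cB :=
      mul_le_mul_of_nonneg_right e2 hcBpos.le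
    have e4 : (4 * (n : ℝ) + 2 * (δ * δ')) * 2 ≤ (4 * (n : ℝ) + 2 * (δ * δ')) * cB :=
      mul_le_mul_of_nonneg_left hcB2 (by positivity)
    have hq : 4 * (n : ℝ) < δ * δ' * (cB * cB) := by
      have hn0 : (0:ℝ) ≤ (n:ℝ) := Nat.cast_nonneg n
      linarith [e3, e4, hdd, hn0]
    have hq2 : (4 * (n : ℝ)) * (X * Y) < (δ * δ' * (cB * cB)) * (X * Y) :=
      mul_lt_mul_of_pos_right hq (mul_pos hX0 hY0)
    have hr : (δ * δ' / 4) * ((cB * Y) * (cB * X)) = (δ * δ' * (cB * cB)) * (X * Y) / 4 := by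
      ring
    have q1 : (δ * δ' / 4) * ((cB * Y) * (cB * X)) ≤ (δ / 2 * sigma) * (δ' / 2 * (W * mu)) := by
      calc (δ * δ' / 4) * ((cB * Y) * (cB * X))
          ≤ (δ * δ' / 4) * (sigma * (W * mu)) :=
            mul_le_mul_of_nonneg_left e1 (by positivity)
        _ = (δ / 2 * sigma) * (δ' / 2 * (W * mu)) := by ring
    calc n * (X * Y) < (δ * δ' * (cB * cB)) * (X * Y) / 4 := by linarith
      _ = (δ * δ' / 4) * ((cB * Y) * (cB * X)) := hr.symm
      _ ≤ (δ / 2 * sigma) * (δ' / 2 * (W * mu)) := q1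
  have hchain : (δ / 2 * sigma) * (δ' / 2 * (W * mu)) ≤ n * (X * Y) := by
    calc (δ / 2 * sigma) * (δ' / 2 * (W * mu)) ≤ At * Ac := hbig
      _ ≤ t i * cv i := hlow
      _ ≤ ∑ j, t j * cv j := hfin1
      _ = ∑ k, x k * y k := hsumid
      _ ≤ n * (X * Y) := hfin2
  linarith
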